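/- Let p, q, r be pairwise coprime positive integers greater than 1, with F_k, a_k, c_k defined by the unique representation k + F_k·pqr = a_k·qr + b_k·rp + c_k·pq (0 ≤ a_k < p, 0 ≤ b_k < q, 0 ≤ c_k < r). Then F_k - F_{k-q} = -1 if a_k < r⁻¹(p) and c_k < p⁻¹(r); F_k - F_{k-q} = 1 if a_k ≥ r⁻¹(p) and c_k ≥ p⁻¹(r); and F_k - F_{k-q} = 0 otherwise. Here r⁻¹(p) ∈ {1,...,p-1} is the inverse of r mod p and p⁻¹(r) ∈ {1,...,r-1} is the inverse of p mod r. -/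
import Mathlib

-- helper: divisible and in (-2n, n) means 0 or -n
lemma aux_dvd_interval {n x : ℤ} (hn : 0 < n) (h : n ∣ x) (hl : -(2*n) < x) (hu : x < n) :
    x = 0 ∨ x = -n := by
  obtain ⟨w, rfl⟩ := h
  have h1 : w < 1 := by
    by_contra hc; push_neg at hc
    nlinarith
  have h2 : -2 < w := by
    by_contra hc; push_neg at hc
    nlinarith
  interval_cases w
  · right; ring
  · left; ring

lemma aux_dvd_interval2 {n x : ℤ} (hn : 0 < n) (h : n ∣ x) (hl : 0 < x) (hu : x < 2*n) :
    x = n := by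
  obtain ⟨w, rfl⟩ := h
  have h1 : w < 2 := by
    by_contra hc; push_neg at hc
    nlinarith
  have h2 : 0 < w := by
    by_contra hc; push_neg at hc
    nlinarith
  have : w = 1 := by omega
  subst this; ring

theorem stmt6 (p q r : ℤ) (hp : 1 < p) (hq : 1 < q) (hr : 1 < r)
    (hpq : IsCoprime p q) (hqr : IsCoprime q r) (hrp : IsCoprime r p)
    (F a b c : ℤ → ℤ)
    (hrep : ∀ k : ℤ, 0 ≤ a k ∧ a k < p ∧ 0 ≤ b k ∧ b k < q ∧ 0 ≤ c k ∧ c k < r ∧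
      k + F k * (p * q * r) = a k * (q * r) + b k * (r * p) + c k * (p * q))
    (irp ipr : ℤ)
    (hirp : 1 ≤ irp ∧ irp ≤ p - 1 ∧ r * irp ≡ 1 [ZMOD p])
    (hipr : 1 ≤ ipr ∧ ipr ≤ r - 1 ∧ p * ipr ≡ 1 [ZMOD r]) :
    ∀ k : ℤ,
      (a k < irp ∧ c k < ipr → F k - F (k - q) = -1) ∧
      (irp ≤ a k ∧ ipr ≤ c k → F k - F (k - q) = 1) ∧
      (¬(a k < irp ∧ c k < ipr) ∧ ¬(irp ≤ a k ∧ ipr ≤ c k) → F k - F (k - q) = 0) := by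
  obtain ⟨hirp1, hirp2, hirp3⟩ := hirp
  obtain ⟨hipr1, hipr2, hipr3⟩ := hipr
  have hp0 : (0:ℤ) < p := by linarith
  have hq0 : (0:ℤ) < q := by linarith
  have hr0 : (0:ℤ) < r := by linarith
  have hpr0 : (0:ℤ) < p * r := mul_pos hp0 hr0
  have hdp1 : p ∣ 1 - r * irp := hirp3.dvd
  have hdr1 : r ∣ 1 - p * ipr := hipr3.dvd
  obtain ⟨t0, ht0⟩ := hdp1
  obtain ⟨u0, hu0⟩ := hdr1
  -- key identity: irp*r + ipr*p = 1 + p*r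
  have hid : irp * r + ipr * p = 1 + p * r := by
    have hd1 : p ∣ irp * r + ipr * p - 1 := ⟨ipr - t0, by linarith [ht0]⟩
    have hd2 : r ∣ irp * r + ipr * p - 1 := ⟨irp - u0, by linarith [hu0]⟩
    have hd : p * r ∣ irp * r + ipr * p - 1 := hrp.symm.mul_dvd hd1 hd2
    have hpos : 0 < irp * r + ipr * p - 1 := by nlinarith
    have hlt : irp * r + ipr * p - 1 < 2 * (p * r) := by nlinarith
    have := aux_dvd_interval2 hpr0 hd hpos hlt
    linarith
  intro k
  obtain ⟨ha0, hap, hb0, hbq, hc0, hcr, heq⟩ := hrep k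
  obtain ⟨ha0', hap', hb0', hbq', hc0', hcr', heq'⟩ := hrep (k - q)
  set D := F k - F (k - q) with hD
  set A := a k - a (k - q) with hA
  set B := b k - b (k - q) with hB
  set C := c k - c (k - q) with hC
  have hsub : q + D * (p * q * r) = A * (q * r) + B * (r * p) + C * (p * q) := by
    simp only [hD, hA, hB, hC]
    linear_combination heq - heq'
  -- B = 0
  have hBdvd : q ∣ B * (r * p) := ⟨1 + D * (p * r) - A * r - C * p, by linear_combination -hsub⟩
  have hB0 : B = 0 := by
    have hdB : q ∣ B := (hqr.mul_right hpq.symm).dvd_of_dvd_mul_right hBdvd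
    obtain ⟨w, hw⟩ := hdB
    have h1 : w < 1 := by by_contra hc; push_neg at hc; nlinarith [hbq, hb0']
    have h2 : -1 < w := by by_contra hc; push_neg at hc; nlinarith [hb0, hbq']
    have : w = 0 := by omega
    simp [this] at hw; exact hw
  -- main equation
  have hmain : 1 + D * (p * r) = A * r + C * p := by
    have h2 : q * (1 + D * (p * r)) = q * (A * r + C * p) := by
      linear_combination hsub + (r * p) * hB0
    exact mul_left_cancel₀ (ne_of_gt hq0) h2
  -- A = irp or A = irp - p
  have hAd : p ∣ (A - irp) * r := ⟨D * r - C + t0, by linear_combination ht0 - hmain⟩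
  have hAdvd : p ∣ A - irp := hrp.symm.dvd_of_dvd_mul_right hAd
  have hAcase : A - irp = 0 ∨ A - irp = -p := by
    refine aux_dvd_interval hp0 hAdvd ?_ ?_ <;> simp only [hA] <;> omega
  -- C = ipr or C = ipr - r
  have hCd : r ∣ (C - ipr) * p := ⟨D * p - A + u0, by linear_combination hu0 - hmain⟩
  have hCdvd : r ∣ C - ipr := hrp.dvd_of_dvd_mul_right hCd
  have hCcase : C - ipr = 0 ∨ C - ipr = -r := by
    refine aux_dvd_interval hr0 hCdvd ?_ ?_ <;> simp only [hC] <;> omega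
  have hprne : p * r ≠ 0 := ne_of_gt hpr0
  rcases hAcase with hA1 | hA1 <;> rcases hCcase with hC1 | hC1
  · -- A = irp, C = ipr → D = 1, a k ≥ irp, c k ≥ ipr
    have hDval : D = 1 := by
      have h : (D - 1) * (p * r) = 0 := by linear_combination hmain + hid + r * hA1 + p * hC1
      rcases mul_eq_zero.mp h with h | h
      · linarith
      · exact absurd h hprne
    rw [hD] at hDval
    have hak : irp ≤ a k := by simp only [hA] at hA1; omega
    have hck : ipr ≤ c k := by simp only [hC] at hC1; omega
    exact ⟨fun h => by omega, fun _ => hDval, fun h => by omega⟩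
  · -- A = irp, C = ipr - r → D = 0
    have hDval : D = 0 := by
      have h : D * (p * r) = 0 := by linear_combination hmain + hid + r * hA1 + p * hC1
      rcases mul_eq_zero.mp h with h | h
      · exact h
      · exact absurd h hprne
    rw [hD] at hDval
    have hak : irp ≤ a k := by simp only [hA] at hA1; omega
    have hck : c k < ipr := by simp only [hC] at hC1; omega
    exact ⟨fun h => by omega, fun h => by omega, fun _ => hDval⟩
  · -- A = irp - p, C = ipr → D = 0
    have hDval : D = 0 := by
      have h : D * (p * r) = 0 := by linear_combination hmain + hid + r * hA1 + p * hC1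
      rcases mul_eq_zero.mp h with h | h
      · exact h
      · exact absurd h hprne
    rw [hD] at hDval
    have hak : a k < irp := by simp only [hA] at hA1; omega
    have hck : ipr ≤ c k := by simp only [hC] at hC1; omega
    exact ⟨fun h => by omega, fun h => by omega, fun _ => hDval⟩
  · -- A = irp - p, C = ipr - r → D = -1
    have hDval : D = -1 := by
      have h : (D + 1) * (p * r) = 0 := by linear_combination hmain + hid + r * hA1 + p * hC1
      rcases mul_eq_zero.mp h with h | h
      · linarith
      · exact absurd h hprne
    rw [hD] at hDval
    have hak : a k < irp := by simp only [hA] at hA1; omega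
    have hck : c k < ipr := by simp only [hC] at hC1; omega
    exact ⟨fun _ => hDval, fun h => by omega, fun h => by omega⟩
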